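/- arXiv:0808.3773 — 3 statements merged into one kernel-verified Lean document; each statement's English description precedes it below -/
import Mathlib

section
/- Quadratic bounds on the fermionic entropy function: For every x ∈ [−1, 1], the function f(x) = −((1−x)/2)·log₂((1−x)/2) − ((1+x)/2)·log₂((1+x)/2) satisfies (1 − x²)^{1/2} ≥ f(x) ≥ 1 − x². -/
open scoped BigOperators

/-- The fermionic binary-entropy-type function
`f(x) = −((1−x)/2)·log₂((1−x)/2) − ((1+x)/2)·log₂((1+x)/2)`.
Note that `Real.logb 2 0 = 0`, so the convention `0·log₂ 0 = 0` is automatic. -/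
noncomputable def fermiEntropy (x : ℝ) : ℝ :=
  -((1 - x) / 2 * Real.logb 2 ((1 - x) / 2)) - (1 + x) / 2 * Real.logb 2 ((1 + x) / 2)


open Real Set

/-- A function on `[0,1]` vanishing with its derivative at `0`, vanishing at `1`,
convex on `[0,c]` and concave on `[c,1]`, is nonnegative on `[0,1]`. -/
lemma unimodal_nonneg (f f' f'' : ℝ → ℝ) (c : ℝ) (hc : c ∈ Ioo (0:ℝ) 1)
    (hcont : ContinuousOn f (Icc 0 1))
    (hd1 : ∀ x ∈ Ioo (0:ℝ) 1, HasDerivAt f (f' x) x)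
    (hd2 : ∀ x ∈ Ioo (0:ℝ) 1, HasDerivAt f' (f'' x) x)
    (hf0 : f 0 = 0) (hf'0 : f' 0 = 0) (hf1 : f 1 = 0)
    (hf'cont : ContinuousOn f' (Icc 0 c))
    (h2a : ∀ x ∈ Ioo (0:ℝ) c, 0 ≤ f'' x)
    (h2b : ∀ x ∈ Ioo c 1, f'' x ≤ 0) :
    ∀ x ∈ Icc (0:ℝ) 1, 0 ≤ f x := by
  obtain ⟨hc0, hc1⟩ := hc
  have hIoo1 : Ioo (0:ℝ) c ⊆ Ioo 0 1 := Ioo_subset_Ioo le_rfl hc1.le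
  have hIoo2 : Ioo c 1 ⊆ Ioo 0 1 := Ioo_subset_Ioo hc0.le le_rfl
  -- f' is monotone on [0,c], hence nonneg there
  have hm1 : MonotoneOn f' (Icc 0 c) := by
    refine monotoneOn_of_hasDerivWithinAt_nonneg (convex_Icc 0 c) hf'cont
      (f' := f'') ?_ ?_
    · intro x hx
      rw [interior_Icc] at hx
      exact (hd2 x (hIoo1 hx)).hasDerivWithinAt
    · intro x hx
      rw [interior_Icc] at hx
      exact h2a x hx
  have hf'nonneg : ∀ x ∈ Icc (0:ℝ) c, 0 ≤ f' x := by
    intro x hx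
    have := hm1 (left_mem_Icc.2 hc0.le) hx hx.1
    rwa [hf'0] at this
  -- hence f is monotone on [0,c], so nonneg there
  have hm2 : MonotoneOn f (Icc 0 c) := by
    refine monotoneOn_of_hasDerivWithinAt_nonneg (convex_Icc 0 c)
      (hcont.mono (Icc_subset_Icc le_rfl hc1.le)) (f' := f') ?_ ?_
    · intro x hx
      rw [interior_Icc] at hx
      exact (hd1 x (hIoo1 hx)).hasDerivWithinAt
    · intro x hx
      rw [interior_Icc] at hx
      exact hf'nonneg x (Ioo_subset_Icc_self hx)
  have hnn1 : ∀ x ∈ Icc (0:ℝ) c, 0 ≤ f x := by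
    intro x hx
    have := hm2 (left_mem_Icc.2 hc0.le) hx hx.1
    rwa [hf0] at this
  -- f is concave on [c,1]
  have hconc : ConcaveOn ℝ (Icc c 1) f := by
    refine concaveOn_of_hasDerivWithinAt2_nonpos (convex_Icc c 1)
      (hcont.mono (Icc_subset_Icc hc0.le le_rfl)) (f' := f') (f'' := f'') ?_ ?_ ?_
    · intro x hx
      rw [interior_Icc] at hx
      exact (hd1 x (hIoo2 hx)).hasDerivWithinAt
    · intro x hx
      rw [interior_Icc] at hx
      exact (hd2 x (hIoo2 hx)).hasDerivWithinAt
    · intro x hx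
      rw [interior_Icc] at hx
      exact h2b x hx
  -- conclude on [c,1] via the chord inequality
  have hnn2 : ∀ x ∈ Icc c 1, 0 ≤ f x := by
    intro x hx
    have hc1' : (0:ℝ) < 1 - c := by linarith
    set a : ℝ := (1 - x) / (1 - c) with ha_def
    set b : ℝ := (x - c) / (1 - c) with hb_def
    have ha : 0 ≤ a := div_nonneg (by linarith [hx.2]) hc1'.le
    have hb : 0 ≤ b := div_nonneg (by linarith [hx.1]) hc1'.le
    have hab : a + b = 1 := by
      rw [ha_def, hb_def, ← add_div, div_eq_one_iff_eq hc1'.ne']; ring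
    have key := hconc.2 (left_mem_Icc.2 hc1.le) (right_mem_Icc.2 hc1.le) ha hb hab
    have hx' : a • c + b • (1:ℝ) = x := by
      show (1 - x) / (1 - c) * c + (x - c) / (1 - c) * 1 = x
      rw [div_mul_eq_mul_div, div_mul_eq_mul_div, ← add_div,
        div_eq_iff hc1'.ne']
      ring
    rw [hx'] at key
    have : 0 ≤ a • f c + b • f 1 := by
      rw [hf1, smul_eq_mul, smul_eq_mul, mul_zero, add_zero]
      exact mul_nonneg ha (hnn1 c ⟨hc0.le, le_rfl⟩)
    linarith
  intro x hx
  rcases le_total x c with h | h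
  · exact hnn1 x ⟨hx.1, h⟩
  · exact hnn2 x ⟨h, hx.2⟩


noncomputable def phiF (x : ℝ) : ℝ := (1+x)*Real.log (1+x) + (1-x)*Real.log (1-x)

lemma hasDerivAt_phiF {x : ℝ} (h1 : -1 < x) (h2 : x < 1) :
    HasDerivAt phiF (Real.log (1+x) - Real.log (1-x)) x := by
  have h1p : (0:ℝ) < 1 + x := by linarith
  have h2p : (0:ℝ) < 1 - x := by linarith
  have d1 : HasDerivAt (fun y : ℝ => 1 + y) 1 x := by
    simpa using (hasDerivAt_id x).const_add (1:ℝ)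
  have d2 : HasDerivAt (fun y : ℝ => 1 - y) (-1) x := by
    simpa using (hasDerivAt_id x).const_sub (1:ℝ)
  have dl1 : HasDerivAt (fun y : ℝ => Real.log (1+y)) (1/(1+x)) x := by
    simpa [Function.comp_def] using (Real.hasDerivAt_log h1p.ne').comp x d1
  have dl2 : HasDerivAt (fun y : ℝ => Real.log (1-y)) (-(1/(1-x))) x := by
    have := (Real.hasDerivAt_log h2p.ne').comp x d2
    simpa [Function.comp_def] using this
  have A := d1.mul dl1
  have B := d2.mul dl2
  have C := A.add B
  refine HasDerivAt.congr_deriv C ?_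
  field_simp [phiF]
  ring

lemma hasDerivAt_phiF' {x : ℝ} (h1 : -1 < x) (h2 : x < 1) :
    HasDerivAt (fun y => Real.log (1+y) - Real.log (1-y)) (1/(1+x) + 1/(1-x)) x := by
  have h1p : (0:ℝ) < 1 + x := by linarith
  have h2p : (0:ℝ) < 1 - x := by linarith
  have d1 : HasDerivAt (fun y : ℝ => 1 + y) 1 x := by
    simpa using (hasDerivAt_id x).const_add (1:ℝ)
  have d2 : HasDerivAt (fun y : ℝ => 1 - y) (-1) x := by
    simpa using (hasDerivAt_id x).const_sub (1:ℝ)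
  have dl1 : HasDerivAt (fun y : ℝ => Real.log (1+y)) (1/(1+x)) x := by
    simpa [Function.comp_def] using (Real.hasDerivAt_log h1p.ne').comp x d1
  have dl2 : HasDerivAt (fun y : ℝ => Real.log (1-y)) (-(1/(1-x))) x := by
    simpa [Function.comp_def] using (Real.hasDerivAt_log h2p.ne').comp x d2
  have := dl1.sub dl2
  refine HasDerivAt.congr_deriv this ?_
  ring

lemma hasDerivAt_sqrt_one_sub_sq {x : ℝ} (h1 : -1 < x) (h2 : x < 1) :
    HasDerivAt (fun y : ℝ => Real.sqrt (1 - y^2)) (-x / Real.sqrt (1 - x^2)) x := by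
  have hpos : (0:ℝ) < 1 - x^2 := by nlinarith
  have hs : Real.sqrt (1 - x^2) ≠ 0 := by positivity
  have dg : HasDerivAt (fun y : ℝ => 1 - y^2) (-(2*x)) x := by
    simpa using (hasDerivAt_pow 2 x).const_sub (1:ℝ)
  have := dg.sqrt (by positivity)
  refine HasDerivAt.congr_deriv this ?_
  rw [div_eq_div_iff (by positivity) hs]
  ring

noncomputable def LF (x : ℝ) : ℝ := 2*Real.log 2*x^2 - phiF x
noncomputable def LF' (x : ℝ) : ℝ := 4*Real.log 2*x - (Real.log (1+x) - Real.log (1-x))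
noncomputable def LF'' (x : ℝ) : ℝ := 4*Real.log 2 - (1/(1+x) + 1/(1-x))

noncomputable def VF (x : ℝ) : ℝ := 2*Real.log 2*(Real.sqrt (1-x^2) - 1) + phiF x
noncomputable def VF' (x : ℝ) : ℝ :=
  Real.log (1+x) - Real.log (1-x) - 2*Real.log 2*(x/Real.sqrt (1-x^2))
noncomputable def VF'' (x : ℝ) : ℝ :=
  1/(1+x) + 1/(1-x) - 2*Real.log 2*(1/((1-x^2)*Real.sqrt (1-x^2)))

lemma hasDerivAt_LF {x : ℝ} (h1 : -1 < x) (h2 : x < 1) : HasDerivAt LF (LF' x) x := by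
  have := ((hasDerivAt_pow 2 x).const_mul (2*Real.log 2)).sub (hasDerivAt_phiF h1 h2)
  refine HasDerivAt.congr_deriv this ?_
  simp [LF']
  ring

lemma hasDerivAt_LF' {x : ℝ} (h1 : -1 < x) (h2 : x < 1) : HasDerivAt LF' (LF'' x) x := by
  have := ((hasDerivAt_id x).const_mul (4*Real.log 2)).sub (hasDerivAt_phiF' h1 h2)
  refine HasDerivAt.congr_deriv this ?_
  simp [LF'']

lemma hasDerivAt_VF {x : ℝ} (h1 : -1 < x) (h2 : x < 1) : HasDerivAt VF (VF' x) x := by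
  have := (((hasDerivAt_sqrt_one_sub_sq h1 h2).sub_const 1).const_mul
    (2*Real.log 2)).add (hasDerivAt_phiF h1 h2)
  refine HasDerivAt.congr_deriv this ?_
  simp only [VF']
  ring

lemma hasDerivAt_VF' {x : ℝ} (h1 : -1 < x) (h2 : x < 1) : HasDerivAt VF' (VF'' x) x := by
  have hpos : (0:ℝ) < 1 - x^2 := by nlinarith
  have hspos : 0 < Real.sqrt (1 - x^2) := Real.sqrt_pos.2 hpos
  have hsq : (Real.sqrt (1 - x^2))^2 = 1 - x^2 := Real.sq_sqrt hpos.le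
  have ddiv : HasDerivAt (fun y : ℝ => y / Real.sqrt (1-y^2))
      (1/((1-x^2)*Real.sqrt (1-x^2))) x := by
    have := (hasDerivAt_id x).div (hasDerivAt_sqrt_one_sub_sq h1 h2) hspos.ne'
    refine HasDerivAt.congr_deriv this ?_
    rw [div_eq_div_iff (by positivity) (by positivity)]
    field_simp
    rw [show id x = x from rfl, hsq]; ring
  have := (hasDerivAt_phiF' h1 h2).sub (ddiv.const_mul (2*Real.log 2))
  exact this

lemma continuous_phiF : Continuous phiF := by
  have h1 : Continuous fun x : ℝ => (1+x)*Real.log (1+x) :=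
    Real.continuous_mul_log.comp (continuous_const.add continuous_id)
  have h2 : Continuous fun x : ℝ => (1-x)*Real.log (1-x) :=
    Real.continuous_mul_log.comp (continuous_const.sub continuous_id)
  exact h1.add h2

lemma continuous_LF : Continuous LF :=
  (continuous_const.mul (continuous_pow 2)).sub continuous_phiF

lemma continuous_VF : Continuous VF := by
  have : Continuous fun x : ℝ => Real.sqrt (1-x^2) :=
    Real.continuous_sqrt.comp (continuous_const.sub (continuous_pow 2))
  exact (continuous_const.mul (this.sub continuous_const)).add continuous_phiF

lemma contOn_logdiff {c : ℝ} (hc : c < 1) :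
    ContinuousOn (fun y : ℝ => Real.log (1+y) - Real.log (1-y)) (Icc 0 c) := by
  intro x hx
  have h1 : (0:ℝ) < 1 + x := by have := hx.1; linarith
  have h2 : (0:ℝ) < 1 - x := by have := hx.2; linarith
  apply ContinuousAt.continuousWithinAt
  exact ((Real.continuousAt_log h1.ne').comp
      ((continuous_const.add continuous_id).continuousAt)).sub
    ((Real.continuousAt_log h2.ne').comp
      ((continuous_const.sub continuous_id).continuousAt))

lemma contOn_LF' {c : ℝ} (hc : c < 1) : ContinuousOn LF' (Icc 0 c) :=
  ((continuous_const.mul continuous_id).continuousOn).sub (contOn_logdiff hc)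

lemma contOn_VF' {c : ℝ} (hc : c < 1) : ContinuousOn VF' (Icc 0 c) := by
  refine (contOn_logdiff hc).sub (continuousOn_const.mul ?_)
  intro x hx
  have h2 : (0:ℝ) < 1 - x^2 := by
    have := hx.1; have := hx.2; nlinarith
  apply ContinuousAt.continuousWithinAt
  refine continuousAt_id.div ?_ (by positivity)
  exact Real.continuous_sqrt.continuousAt.comp
    ((continuous_const.sub (continuous_pow 2)).continuousAt)

lemma log2_gt_half : (1/2 : ℝ) < Real.log 2 := by
  have := Real.log_two_gt_d9; norm_num at this ⊢; linarith

lemma log2_lt_one : Real.log 2 < 1 := by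
  have := Real.log_two_lt_d9; norm_num at this ⊢; linarith

lemma LF_zero : LF 0 = 0 := by norm_num [LF, phiF]
lemma LF'_zero : LF' 0 = 0 := by norm_num [LF']
lemma LF_one : LF 1 = 0 := by norm_num [LF, phiF]
lemma VF_zero : VF 0 = 0 := by norm_num [VF, phiF]
lemma VF'_zero : VF' 0 = 0 := by norm_num [VF']
lemma VF_one : VF 1 = 0 := by norm_num [VF, phiF]

noncomputable def cL : ℝ := Real.sqrt (1 - 1/(2*Real.log 2))
noncomputable def cV : ℝ := Real.sqrt (1 - (Real.log 2)^2)

lemma log2_pos' : (0:ℝ) < Real.log 2 := by linarith [log2_gt_half]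

lemma cL_mem : cL ∈ Ioo (0:ℝ) 1 := by
  have h2 : (1:ℝ) < 2*Real.log 2 := by linarith [log2_gt_half]
  have hpos : (0:ℝ) < 1 - 1/(2*Real.log 2) := by
    have : 1/(2*Real.log 2) < 1 := by
      rw [div_lt_one (by linarith)]; exact h2
    linarith
  constructor
  · exact Real.sqrt_pos.2 hpos
  · rw [show (1:ℝ) = Real.sqrt 1 from (Real.sqrt_one).symm]
    apply Real.sqrt_lt_sqrt hpos.le
    have : 0 < 1/(2*Real.log 2) := by positivity
    linarith

lemma cV_mem : cV ∈ Ioo (0:ℝ) 1 := by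
  have h1 : (0:ℝ) < Real.log 2 := log2_pos'
  have h2 : (Real.log 2)^2 < 1 := by nlinarith [log2_lt_one]
  constructor
  · exact Real.sqrt_pos.2 (by linarith)
  · rw [show (1:ℝ) = Real.sqrt 1 from (Real.sqrt_one).symm]
    apply Real.sqrt_lt_sqrt (by linarith)
    nlinarith

lemma LF''_nonneg {x : ℝ} (hx : x ∈ Ioo 0 cL) : 0 ≤ LF'' x := by
  have hx0 := hx.1
  have hx1 : x < 1 := hx.2.trans cL_mem.2
  have hsq : x^2 < 1 - 1/(2*Real.log 2) := by
    have := (Real.lt_sqrt (le_of_lt hx0)).1 hx.2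
    simpa [cL] using this
  have hl2 : (1/2:ℝ) < Real.log 2 := log2_gt_half
  have h1p : (0:ℝ) < 1 + x := by linarith
  have h2p : (0:ℝ) < 1 - x := by linarith
  have h12 : (1:ℝ) - x^2 = (1+x)*(1-x) := by ring
  have e : 1/(1+x) + 1/(1-x) = 2/(1-x^2) := by
    rw [h12]; field_simp; ring
  rw [LF'', e, sub_nonneg, div_le_iff₀ (by nlinarith)]
  have h1 : 1/(2*Real.log 2) < 1 - x^2 := by linarith
  have h2 : (0:ℝ) < 2*Real.log 2 := by linarith
  rw [div_lt_iff₀ h2] at h1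
  nlinarith

lemma LF''_nonpos {x : ℝ} (hx : x ∈ Ioo cL 1) : LF'' x ≤ 0 := by
  have hx0 : 0 < x := cL_mem.1.trans hx.1
  have hx1 := hx.2
  have hsq : 1 - 1/(2*Real.log 2) < x^2 := by
    have h := hx.1
    rw [cL] at h
    exact (Real.sqrt_lt' hx0).1 h
  have hl2 : (1/2:ℝ) < Real.log 2 := log2_gt_half
  have h1p : (0:ℝ) < 1 + x := by linarith
  have h2p : (0:ℝ) < 1 - x := by linarith
  have h12 : (1:ℝ) - x^2 = (1+x)*(1-x) := by ring
  have e : 1/(1+x) + 1/(1-x) = 2/(1-x^2) := by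
    rw [h12]; field_simp; ring
  rw [LF'', e, sub_nonpos, le_div_iff₀ (by nlinarith)]
  have h1 : 1 - x^2 < 1/(2*Real.log 2) := by linarith
  have h2 : (0:ℝ) < 2*Real.log 2 := by linarith
  rw [lt_div_iff₀ h2] at h1
  nlinarith

lemma VF''_nonneg {x : ℝ} (hx : x ∈ Ioo 0 cV) : 0 ≤ VF'' x := by
  have hx0 := hx.1
  have hx1 : x < 1 := hx.2.trans cV_mem.2
  have hsq : x^2 < 1 - (Real.log 2)^2 := by
    have := (Real.lt_sqrt (le_of_lt hx0)).1 hx.2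
    simpa [cV] using this
  have hpos : (0:ℝ) < 1 - x^2 := by nlinarith [log2_pos']
  have hspos : 0 < Real.sqrt (1-x^2) := Real.sqrt_pos.2 hpos
  have hslog : Real.log 2 < Real.sqrt (1-x^2) := by
    rw [show Real.log 2 = Real.sqrt ((Real.log 2)^2) from
      (Real.sqrt_sq log2_pos'.le).symm]
    apply Real.sqrt_lt_sqrt (by positivity)
    linarith
  have h1p : (0:ℝ) < 1 + x := by linarith
  have h2p : (0:ℝ) < 1 - x := by linarith
  have h12 : (1:ℝ) - x^2 = (1+x)*(1-x) := by ring
  have e : 1/(1+x) + 1/(1-x) = 2/(1-x^2) := by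
    rw [h12]; field_simp; ring
  rw [VF'', e, sub_nonneg, mul_one_div, div_le_div_iff₀ (by positivity) hpos]
  nlinarith [hspos]

lemma VF''_nonpos {x : ℝ} (hx : x ∈ Ioo cV 1) : VF'' x ≤ 0 := by
  have hx0 : 0 < x := cV_mem.1.trans hx.1
  have hx1 := hx.2
  have hsq : 1 - (Real.log 2)^2 < x^2 := by
    have h := hx.1
    rw [cV] at h
    exact (Real.sqrt_lt' hx0).1 h
  have hpos : (0:ℝ) < 1 - x^2 := by nlinarith
  have hspos : 0 < Real.sqrt (1-x^2) := Real.sqrt_pos.2 hpos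
  have hslog : Real.sqrt (1-x^2) < Real.log 2 := by
    rw [show Real.log 2 = Real.sqrt ((Real.log 2)^2) from
      (Real.sqrt_sq log2_pos'.le).symm]
    apply Real.sqrt_lt_sqrt hpos.le
    linarith
  have h1p : (0:ℝ) < 1 + x := by linarith
  have h2p : (0:ℝ) < 1 - x := by linarith
  have h12 : (1:ℝ) - x^2 = (1+x)*(1-x) := by ring
  have e : 1/(1+x) + 1/(1-x) = 2/(1-x^2) := by
    rw [h12]; field_simp; ring
  rw [VF'', e, sub_nonpos, mul_one_div, div_le_div_iff₀ hpos (by positivity)]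
  nlinarith [hspos]

lemma LF_nonneg : ∀ x ∈ Icc (0:ℝ) 1, 0 ≤ LF x :=
  unimodal_nonneg LF LF' LF'' cL cL_mem continuous_LF.continuousOn
    (fun x hx => hasDerivAt_LF (by linarith [hx.1]) hx.2)
    (fun x hx => hasDerivAt_LF' (by linarith [hx.1]) hx.2)
    LF_zero LF'_zero LF_one (contOn_LF' cL_mem.2)
    (fun x hx => LF''_nonneg hx) (fun x hx => LF''_nonpos hx)

lemma VF_nonneg : ∀ x ∈ Icc (0:ℝ) 1, 0 ≤ VF x :=
  unimodal_nonneg VF VF' VF'' cV cV_mem continuous_VF.continuousOn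
    (fun x hx => hasDerivAt_VF (by linarith [hx.1]) hx.2)
    (fun x hx => hasDerivAt_VF' (by linarith [hx.1]) hx.2)
    VF_zero VF'_zero VF_one (contOn_VF' cV_mem.2)
    (fun x hx => VF''_nonneg hx) (fun x hx => VF''_nonpos hx)


lemma fermi_eq {x : ℝ} (h1 : -1 < x) (h2 : x < 1) :
    fermiEntropy x = 1 - phiF x / (2*Real.log 2) := by
  have h1p : (0:ℝ) < 1 + x := by linarith
  have h2p : (0:ℝ) < 1 - x := by linarith
  have hl2 : Real.log 2 ≠ 0 := log2_pos'.ne'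
  rw [fermiEntropy, phiF, Real.logb, Real.logb,
      Real.log_div h2p.ne' two_ne_zero, Real.log_div h1p.ne' two_ne_zero]
  field_simp
  ring

lemma fermi_neg (x : ℝ) : fermiEntropy (-x) = fermiEntropy x := by
  unfold fermiEntropy
  rw [show (1:ℝ) - -x = 1 + x by ring, show (1:ℝ) + -x = 1 - x by ring]
  ring

lemma key_bounds {y : ℝ} (hy0 : 0 ≤ y) (hy1 : y < 1) :
    1 - y^2 ≤ fermiEntropy y ∧ fermiEntropy y ≤ Real.sqrt (1 - y^2) := by
  have hd : (0:ℝ) < 2*Real.log 2 := by linarith [log2_gt_half]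
  have hL := LF_nonneg y ⟨hy0, hy1.le⟩
  have hV := VF_nonneg y ⟨hy0, hy1.le⟩
  simp only [LF] at hL
  simp only [VF] at hV
  rw [fermi_eq (by linarith) hy1]
  constructor
  · have : phiF y / (2*Real.log 2) ≤ y^2 := by
      rw [div_le_iff₀ hd]; nlinarith
    linarith
  · have : 1 - Real.sqrt (1-y^2) ≤ phiF y / (2*Real.log 2) := by
      rw [le_div_iff₀ hd]; nlinarith
    linarith

/-- Quadratic bounds on the fermionic entropy function:
for every `x ∈ [−1, 1]`, `√(1 − x²) ≥ f(x) ≥ 1 − x²`. -/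
theorem fermiEntropy_quadratic_bounds (x : ℝ) (hx : x ∈ Set.Icc (-1 : ℝ) 1) :
    1 - x ^ 2 ≤ fermiEntropy x ∧ fermiEntropy x ≤ Real.sqrt (1 - x ^ 2) := by
  obtain ⟨hx1, hx2⟩ := hx
  have habs : |x| ≤ 1 := abs_le.2 ⟨hx1, hx2⟩
  have hfe : fermiEntropy x = fermiEntropy |x| := by
    rcases abs_cases x with ⟨h, _⟩ | ⟨h, _⟩
    · rw [h]
    · rw [h, fermi_neg]
  have hsq : x^2 = |x|^2 := (sq_abs x).symm
  rcases lt_or_eq_of_le habs with h | h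
  · rw [hfe, hsq]
    exact key_bounds (abs_nonneg x) h
  · have hx2' : x^2 = 1 := by rw [hsq, h]; norm_num
    have hfx : fermiEntropy x = 0 := by
      rw [hfe, h]
      norm_num [fermiEntropy]
    rw [hfx, hx2']
    norm_num
end

section
/- Gibbs variational principle in finite dimensions: Let H be a Hermitian complex n×n matrix, let β > 0, and let ρ_β = e^{−βH}/tr[e^{−βH}]. Then for every density matrix ρ (positive semidefinite n×n complex matrix with trace 1), tr[Hρ_β] − S(ρ_β)/β ≤ tr[Hρ] − S(ρ)/β, where S denotes the von Neumann entropy in nats, S(ρ) = −∑_k λ_k ln λ_k with λ_k the eigenvalues of ρ and 0·ln 0 = 0. That is, the Gibbs state minimizes the free energy F(ρ) = tr[Hρ] − S(ρ)/β over all density matrices. -/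
open scoped BigOperators
open Matrix

/-- The von Neumann entropy in nats: `S(ρ) = −∑ λᵢ ln λᵢ` where `λᵢ` are the eigenvalues
(junk value `0` if not Hermitian); `Real.log 0 = 0` makes `0·ln 0 = 0` automatic. -/
noncomputable def vNEntropyNats {n : Type*} [Fintype n] [DecidableEq n]
    (ρ : Matrix n n ℂ) : ℝ :=
  if h : ρ.IsHermitian then -∑ i, h.eigenvalues i * Real.log (h.eigenvalues i) else 0

attribute [local instance] Matrix.linftyOpNormedAddCommGroup Matrix.linftyOpNormedRing
  Matrix.linftyOpNormedAlgebra

/-- The matrix exponential. -/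
noncomputable def mexp {n : Type*} [Fintype n] [DecidableEq n] (A : Matrix n n ℂ) :
    Matrix n n ℂ :=
  NormedSpace.exp A

open Polynomial in
/-- If a Hermitian matrix is unitarily conjugate to a real diagonal matrix, then any
symmetric function of its eigenvalues can be computed from the diagonal entries. -/
lemma sum_g_eigenvalues_conj_diag {N : ℕ} (A : Matrix (Fin N) (Fin N) ℂ)
    (hA : A.IsHermitian) (U : Matrix (Fin N) (Fin N) ℂ)
    (hU : U ∈ Matrix.unitaryGroup (Fin N) ℂ) (d : Fin N → ℝ)
    (hAd : A = U * Matrix.diagonal (fun i => (d i : ℂ)) * star U)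
    (g : ℝ → ℝ) : ∑ i, g (hA.eigenvalues i) = ∑ i, g (d i) := by
  set L := hA.eigenvalues with hL
  have key : ∀ (V : Matrix (Fin N) (Fin N) ℂ), V ∈ Matrix.unitaryGroup (Fin N) ℂ →
      ∀ (v : Fin N → ℂ) (x : ℂ),
      Matrix.det (x • (1 : Matrix (Fin N) (Fin N) ℂ) - V * Matrix.diagonal v * star V)
        = ∏ i, (x - v i) := by
    intro V hV v x
    have h1 : V * star V = 1 := (Matrix.mem_unitaryGroup_iff).mp hV
    have h2 : x • (1 : Matrix (Fin N) (Fin N) ℂ) - V * Matrix.diagonal v * star V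
        = V * (x • (1 : Matrix (Fin N) (Fin N) ℂ) - Matrix.diagonal v) * star V := by
      rw [Matrix.mul_sub, Matrix.sub_mul]
      congr 1
      rw [Matrix.mul_smul, mul_one, Matrix.smul_mul, h1]
    rw [h2, Matrix.det_mul, Matrix.det_mul, mul_right_comm, ← Matrix.det_mul, h1,
      Matrix.det_one, one_mul]
    have h3 : x • (1 : Matrix (Fin N) (Fin N) ℂ) - Matrix.diagonal v
        = Matrix.diagonal (fun i => x - v i) := by
      rw [Matrix.smul_one_eq_diagonal, Matrix.diagonal_sub]
    rw [h3, Matrix.det_diagonal]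
  have Hdet : ∀ x : ℂ, (∏ i, (x - (d i : ℂ))) = ∏ i, (x - (L i : ℂ)) := by
    intro x
    rw [← key U hU _ x, ← hAd]
    have := hA.spectral_theorem
    conv_lhs => rw [this]
    exact key _ (hA.eigenvectorUnitary).2 _ x
  have hpoly : ((Finset.univ.val.map (fun i => ((d i : ℂ)))).map (fun a => X - C a)).prod
      = ((Finset.univ.val.map (fun i => ((L i : ℂ)))).map (fun a => X - C a)).prod := by
    apply Polynomial.funext
    intro x
    rw [Polynomial.eval_multiset_prod, Polynomial.eval_multiset_prod]
    simp only [Multiset.map_map, Function.comp, Polynomial.eval_sub, Polynomial.eval_X,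
      Polynomial.eval_C]
    have := Hdet x
    rwa [Finset.prod_eq_multiset_prod, Finset.prod_eq_multiset_prod] at this
  have hroots : Finset.univ.val.map (fun i => ((d i : ℂ)))
      = Finset.univ.val.map (fun i => ((L i : ℂ))) := by
    have := congrArg Polynomial.roots hpoly
    rwa [Polynomial.roots_multiset_prod_X_sub_C, Polynomial.roots_multiset_prod_X_sub_C] at this
  have hreal : Finset.univ.val.map d = Finset.univ.val.map L := by
    apply Multiset.map_injective (Complex.ofReal_injective)
    rw [Multiset.map_map, Multiset.map_map]
    exact hroots
  rw [Finset.sum_eq_multiset_sum, Finset.sum_eq_multiset_sum]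
  calc (Finset.univ.val.map fun i => g (L i)).sum
      = ((Finset.univ.val.map L).map g).sum := by rw [Multiset.map_map]; rfl
    _ = ((Finset.univ.val.map d).map g).sum := by rw [hreal]
    _ = (Finset.univ.val.map fun i => g (d i)).sum := by rw [Multiset.map_map]; rfl

open scoped ComplexOrder in
/-- **Gibbs variational principle in finite dimensions.** For a Hermitian `H` and `β > 0`,
the Gibbs state `ρ_β = e^{−βH}/tr[e^{−βH}]` minimizes the free energy
`F(ρ) = tr[Hρ] − S(ρ)/β` over all density matrices `ρ`. -/
theorem gibbs_variational_principle (n : ℕ) (H : Matrix (Fin n) (Fin n) ℂ)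
    (hH : H.IsHermitian) (β : ℝ) (hβ : 0 < β)
    (ρβ : Matrix (Fin n) (Fin n) ℂ)
    (hρβ : ρβ = ((mexp ((-β : ℂ) • H)).trace)⁻¹ • mexp ((-β : ℂ) • H))
    (ρ : Matrix (Fin n) (Fin n) ℂ) (hρ : ρ.PosSemidef) (htr : ρ.trace = 1) :
    (H * ρβ).trace.re - vNEntropyNats ρβ / β ≤ (H * ρ).trace.re - vNEntropyNats ρ / β := by
  classical
  -- dispose of the degenerate case n = 0
  rcases Nat.eq_zero_or_pos n with hn | hn
  · subst hn
    have hz : ∀ A : Matrix (Fin 0) (Fin 0) ℂ, A.trace = 0 := by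
      intro A; rw [Matrix.trace]; simp
    have hS : ∀ A : Matrix (Fin 0) (Fin 0) ℂ, vNEntropyNats A = 0 := by
      intro A; rw [vNEntropyNats]; split <;> simp
    rw [hz, hz, hS, hS]
  haveI : Nonempty (Fin n) := Fin.pos_iff_nonempty.mp hn
  set E := hH.eigenvalues with hE
  set U : Matrix (Fin n) (Fin n) ℂ := (hH.eigenvectorUnitary : Matrix (Fin n) (Fin n) ℂ) with hUdef
  have hU : U ∈ Matrix.unitaryGroup (Fin n) ℂ := hH.eigenvectorUnitary.2
  have hU1 : U * star U = 1 := (Matrix.mem_unitaryGroup_iff).mp hU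
  have hU1' : star U * U = 1 := (Matrix.mem_unitaryGroup_iff').mp hU
  have hUunit : IsUnit U := ⟨⟨U, star U, hU1, hU1'⟩, rfl⟩
  have hUinv : U⁻¹ = star U := Matrix.inv_eq_right_inv hU1
  have hHspec : H = U * Matrix.diagonal (fun i => (E i : ℂ)) * star U := hH.spectral_theorem
  -- the matrix exponential of −βH
  have hexp : mexp ((-β : ℂ) • H)
      = U * Matrix.diagonal (fun i => (Real.exp (-β * E i) : ℂ)) * star U := by
    have h1 : (-β : ℂ) • H = U * Matrix.diagonal (fun i => ((-β * E i : ℝ) : ℂ)) * U⁻¹ := by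
      rw [hUinv]
      have hd : (fun i => ((-β * E i : ℝ) : ℂ))
          = (-β : ℂ) • (fun i => ((E i : ℝ) : ℂ)) := by
        funext i
        simp only [Pi.smul_apply, smul_eq_mul]
        push_cast
        ring
      rw [hd, Matrix.diagonal_smul]
      conv_lhs => rw [hHspec]
      simp only [Matrix.smul_mul, Matrix.mul_smul]
    have hfun : NormedSpace.exp (fun i : Fin n => ((-β * E i : ℝ) : ℂ))
        = fun i : Fin n => (Real.exp (-β * E i) : ℂ) := by
      funext i
      rw [Pi.coe_exp, ← Complex.exp_eq_exp_ℂ, ← Complex.ofReal_exp]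
    rw [mexp, h1, Matrix.exp_conj U _ hUunit, Matrix.exp_diagonal, hUinv, hfun]
  set Zr : ℝ := ∑ i, Real.exp (-β * E i) with hZr
  have hZrpos : 0 < Zr := Finset.sum_pos (fun i _ => Real.exp_pos _) Finset.univ_nonempty
  set p : Fin n → ℝ := fun i => Real.exp (-β * E i) / Zr with hp
  have hppos : ∀ i, 0 < p i := fun i => div_pos (Real.exp_pos _) hZrpos
  have hpsum : ∑ i, p i = 1 := by
    rw [hp, ← Finset.sum_div, ← hZr, div_self hZrpos.ne']
  have htrA : (mexp ((-β : ℂ) • H)).trace = (Zr : ℂ) := by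
    rw [hexp, Matrix.trace_mul_cycle, hU1', one_mul, Matrix.trace_diagonal]
    rw [hZr, Complex.ofReal_sum]
  have hρβeq : ρβ = U * Matrix.diagonal (fun i => (p i : ℂ)) * star U := by
    have hd2 : (fun i => (p i : ℂ))
        = (Zr : ℂ)⁻¹ • (fun i => ((Real.exp (-β * E i) : ℝ) : ℂ)) := by
      funext i
      simp only [Pi.smul_apply, smul_eq_mul, hp]
      push_cast
      rw [div_eq_inv_mul]
    rw [hρβ, htrA, hexp, hd2, Matrix.diagonal_smul, Matrix.mul_smul, Matrix.smul_mul]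
  have hρβherm : ρβ.IsHermitian := by
    have hdiagherm : (Matrix.diagonal (fun i => (p i : ℂ))).IsHermitian := by
      refine Matrix.isHermitian_diagonal_iff.mpr fun i => ?_
      exact Complex.conj_ofReal (p i)
    rw [hρβeq, Matrix.star_eq_conjTranspose]
    exact Matrix.isHermitian_mul_mul_conjTranspose U hdiagherm
  -- entropy of the Gibbs state
  have hSρβ : vNEntropyNats ρβ = -∑ i, p i * Real.log (p i) := by
    rw [vNEntropyNats, dif_pos hρβherm]
    congr 1
    exact sum_g_eigenvalues_conj_diag ρβ hρβherm U hU p hρβeq (fun x => x * Real.log x)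
  -- energy of the Gibbs state
  have htrHρβ : (H * ρβ).trace.re = ∑ i, E i * p i := by
    have hmul : H * ρβ = U * Matrix.diagonal (fun i => (E i : ℂ) * p i) * star U := by
      rw [hHspec, hρβeq, ← Matrix.diagonal_mul_diagonal]
      simp only [mul_assoc]
      rw [← mul_assoc (star U) U, hU1', one_mul]
    rw [hmul, Matrix.trace_mul_cycle, hU1', one_mul, Matrix.trace_diagonal]
    rw [Complex.re_sum]
    congr 1
    funext i
    rw [← Complex.ofReal_mul, Complex.ofReal_re]
  -- free energy of the Gibbs state
  have hlogp : ∀ i, Real.log (p i) = -β * E i - Real.log Zr := by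
    intro i
    rw [hp]
    rw [Real.log_div (Real.exp_pos _).ne' hZrpos.ne', Real.log_exp]
  have hplog : ∑ i, p i * Real.log (p i) = -β * (∑ i, E i * p i) - Real.log Zr := by
    calc ∑ i, p i * Real.log (p i) = ∑ i, (-β * (E i * p i) - Real.log Zr * p i) := by
          refine Finset.sum_congr rfl fun i _ => ?_
          rw [hlogp i]; ring
      _ = -β * (∑ i, E i * p i) - Real.log Zr * ∑ i, p i := by
          rw [Finset.sum_sub_distrib, ← Finset.mul_sum, ← Finset.mul_sum]
      _ = -β * (∑ i, E i * p i) - Real.log Zr := by rw [hpsum, mul_one]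
  have hFβ : (H * ρβ).trace.re - vNEntropyNats ρβ / β = -Real.log Zr / β := by
    rw [htrHρβ, hSρβ, hplog]
    field_simp
    ring
  -- the state ρ in the eigenbasis of H
  set σ : Matrix (Fin n) (Fin n) ℂ := star U * ρ * U with hσdef
  have hσpsd : σ.PosSemidef := by
    have h := hρ.mul_mul_conjTranspose_same (Uᴴ)
    rwa [Matrix.conjTranspose_conjTranspose, ← Matrix.star_eq_conjTranspose] at h
  have hσherm : σ.IsHermitian := hσpsd.1
  have hσtr : σ.trace = 1 := by
    rw [hσdef, Matrix.trace_mul_cycle, hU1, one_mul, htr]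
  set q : Fin n → ℝ := fun i => (σ i i).re with hq
  have htrHρ2 : (H * ρ).trace.re = ∑ i, E i * (q i) := by
    have h1 : H * ρ = U * (Matrix.diagonal (fun i => (E i : ℂ)) * σ) * star U := by
      rw [hHspec, hσdef]
      simp only [mul_assoc]
      rw [hU1, mul_one]
    rw [h1, Matrix.trace_mul_cycle, hU1', one_mul, Matrix.trace]
    rw [Complex.re_sum]
    refine Finset.sum_congr rfl fun i _ => ?_
    rw [Matrix.diag_apply, Matrix.diagonal_mul, Complex.re_ofReal_mul]
  have hqsum : ∑ i, q i = 1 := by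
    have h2 := congrArg Complex.re hσtr
    rw [Matrix.trace, Complex.re_sum] at h2
    simpa using h2
  -- spectral data of σ
  set μ : Fin n → ℝ := hσherm.eigenvalues with hμ
  set W : Matrix (Fin n) (Fin n) ℂ := (hσherm.eigenvectorUnitary : Matrix (Fin n) (Fin n) ℂ)
    with hW
  have hWmem : W ∈ Matrix.unitaryGroup (Fin n) ℂ := hσherm.eigenvectorUnitary.2
  have hW1 : W * star W = 1 := (Matrix.mem_unitaryGroup_iff).mp hWmem
  have hW1' : star W * W = 1 := (Matrix.mem_unitaryGroup_iff').mp hWmem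
  have hσspec : σ = W * Matrix.diagonal (fun k => (μ k : ℂ)) * star W := hσherm.spectral_theorem
  have hμnonneg : ∀ k, 0 ≤ μ k := fun k => hσpsd.eigenvalues_nonneg k
  -- entropy of ρ in terms of μ
  have hρdecomp : ρ = (U * W) * Matrix.diagonal (fun k => (μ k : ℂ)) * star (U * W) := by
    have h3 : ρ = U * σ * star U := by
      rw [hσdef]
      simp only [mul_assoc]
      rw [hU1, mul_one, ← mul_assoc, hU1, one_mul]
    rw [h3]
    conv_lhs => rw [hσspec]
    rw [Matrix.star_mul]
    simp only [mul_assoc]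
  have hUWmem : U * W ∈ Matrix.unitaryGroup (Fin n) ℂ := mul_mem hU hWmem
  have hSρeq : vNEntropyNats ρ = -∑ k, μ k * Real.log (μ k) := by
    rw [vNEntropyNats, dif_pos hρ.1]
    congr 1
    exact sum_g_eigenvalues_conj_diag ρ hρ.1 (U * W) hUWmem μ hρdecomp (fun x => x * Real.log x)
  -- doubly stochastic mixing matrix
  set B : Fin n → Fin n → ℝ := fun i k => Complex.normSq (W i k) with hB
  have hBnonneg : ∀ i k, 0 ≤ B i k := fun i k => Complex.normSq_nonneg _
  have hentry : ∀ i k, W i k * (star W) k i = (Complex.normSq (W i k) : ℂ) := fun i k => by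
    rw [Matrix.star_eq_conjTranspose, Matrix.conjTranspose_apply, Complex.star_def,
      Complex.mul_conj]
  have hqform : ∀ i, q i = ∑ k, B i k * μ k := by
    intro i
    have h3 : σ i i = ∑ k, ((B i k * μ k : ℝ) : ℂ) := by
      conv_lhs => rw [hσspec]
      rw [Matrix.mul_apply]
      refine Finset.sum_congr rfl fun k _ => ?_
      rw [Matrix.mul_diagonal]
      calc W i k * (μ k : ℂ) * (star W) k i
          = (μ k : ℂ) * (W i k * (star W) k i) := by ring
        _ = ((B i k * μ k : ℝ) : ℂ) := by rw [hentry i k]; push_cast; ring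
    calc q i = (σ i i).re := rfl
      _ = ∑ k, ((B i k * μ k : ℝ) : ℂ).re := by rw [h3, Complex.re_sum]
      _ = ∑ k, B i k * μ k := Finset.sum_congr rfl fun k _ => Complex.ofReal_re _
  have hBrow : ∀ i, ∑ k, B i k = 1 := by
    intro i
    have h4 : (W * star W) i i = 1 := by rw [hW1]; simp [Matrix.one_apply]
    rw [Matrix.mul_apply] at h4
    rw [Finset.sum_congr rfl (fun k _ => hentry i k)] at h4
    have h5 := congrArg Complex.re h4
    rw [Complex.re_sum] at h5
    simpa using h5
  have hBcol : ∀ k, ∑ i, B i k = 1 := by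
    intro k
    have h4 : (star W * W) k k = 1 := by rw [hW1']; simp [Matrix.one_apply]
    rw [Matrix.mul_apply] at h4
    have h4' : ∑ i, ((B i k : ℝ) : ℂ) = 1 := by
      rw [← h4]
      refine Finset.sum_congr rfl fun i _ => ?_
      rw [mul_comm, hentry i k]
    have h5 := congrArg Complex.re h4'
    rw [Complex.re_sum] at h5
    simpa using h5
  have hqnonneg : ∀ i, 0 ≤ q i := fun i => by
    rw [hqform i]
    exact Finset.sum_nonneg fun k _ => mul_nonneg (hBnonneg i k) (hμnonneg k)
  -- Jensen's inequality: entropy only increases by pinching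
  have hJensen : ∀ i, ∑ k, B i k * Real.negMulLog (μ k) ≤ Real.negMulLog (q i) := by
    intro i
    have h6 := Real.concaveOn_negMulLog.le_map_sum (t := Finset.univ) (w := B i) (p := μ)
      (fun k _ => hBnonneg i k) (hBrow i) (fun k _ => hμnonneg k)
    have h7 : ∑ k, B i k • μ k = q i := by rw [hqform i]; simp [smul_eq_mul]
    rw [h7] at h6
    simpa [smul_eq_mul] using h6
  have hent : ∑ k, Real.negMulLog (μ k) ≤ ∑ i, Real.negMulLog (q i) := by
    have h8 : ∑ k, Real.negMulLog (μ k) = ∑ k, (∑ i, B i k) * Real.negMulLog (μ k) := by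
      refine Finset.sum_congr rfl fun k _ => by rw [hBcol k, one_mul]
    rw [h8]
    have h9 : ∑ k, (∑ i, B i k) * Real.negMulLog (μ k)
        = ∑ i, ∑ k, B i k * Real.negMulLog (μ k) := by
      simp_rw [Finset.sum_mul]
      rw [Finset.sum_comm]
    rw [h9]
    exact Finset.sum_le_sum fun i _ => hJensen i
  -- classical Gibbs inequality
  have hpoint : ∀ i, q i - p i ≤ q i * Real.log (q i) - q i * Real.log (p i) := by
    intro i
    rcases eq_or_lt_of_le (hqnonneg i) with h | h
    · rw [← h]
      simp only [zero_mul, sub_zero, zero_sub, neg_nonpos]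
      linarith [hppos i]
    · have hlog := Real.log_le_sub_one_of_pos (div_pos (hppos i) h)
      rw [Real.log_div (hppos i).ne' h.ne'] at hlog
      have h10 := mul_le_mul_of_nonneg_left hlog h.le
      have h11 : q i * (p i / q i) = p i := by field_simp
      rw [mul_sub, mul_sub, h11, mul_one] at h10
      linarith
  have hsum0 : ∑ i, q i * Real.log (p i) ≤ ∑ i, q i * Real.log (q i) := by
    have h12 : ∑ i, (q i - p i) = 0 := by
      rw [Finset.sum_sub_distrib, hqsum, hpsum, sub_self]
    have h13 := Finset.sum_le_sum fun i (_ : i ∈ Finset.univ) => hpoint i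
    rw [h12, Finset.sum_sub_distrib] at h13
    linarith
  have hqlogp : ∑ i, q i * Real.log (p i) = -β * (∑ i, E i * q i) - Real.log Zr := by
    calc ∑ i, q i * Real.log (p i) = ∑ i, (-β * (E i * q i) - Real.log Zr * q i) := by
          refine Finset.sum_congr rfl fun i _ => ?_
          rw [hlogp i]; ring
      _ = -β * (∑ i, E i * q i) - Real.log Zr * ∑ i, q i := by
          rw [Finset.sum_sub_distrib, ← Finset.mul_sum, ← Finset.mul_sum]
      _ = -β * (∑ i, E i * q i) - Real.log Zr := by rw [hqsum, mul_one]
  -- final assembly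
  have hent' : -∑ k, μ k * Real.log (μ k) ≤ -∑ i, q i * Real.log (q i) := by
    have hl : ∑ k, Real.negMulLog (μ k) = -∑ k, μ k * Real.log (μ k) := by
      simp [Real.negMulLog, Finset.sum_neg_distrib]
    have hr : ∑ i, Real.negMulLog (q i) = -∑ i, q i * Real.log (q i) := by
      simp [Real.negMulLog, Finset.sum_neg_distrib]
    rw [hl, hr] at hent
    exact hent
  rw [hFβ, htrHρ2, hSρeq]
  rw [div_le_iff₀ hβ, sub_mul, div_mul_cancel₀ _ hβ.ne']
  nlinarith [hent', hsum0, hqlogp]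
end

section
/- Truncation error bound via Renyi entropies: Let α ∈ (0, 1) and let p₁ ≥ p₂ ≥ ⋯ ≥ p_m ≥ 0 be a nonincreasing finite sequence with ∑_{i=1}^m p_i ≤ 1. Then for every integer D with 1 ≤ D < m, ∑_{i=D+1}^{m} p_i ≤ (∑_{i=1}^{m} p_i^α)^{1/α} · D^{−(1−α)/α}. In particular, if the α-Renyi entropy S_α = (1/(1−α)) log₂ ∑_i p_i^α is bounded by a constant, the tail weight beyond the D largest terms decays polynomially in D at rate (1−α)/α. -/
open scoped BigOperators

/-- **Truncation error bound via Renyi entropies.** For `α ∈ (0,1)` and a nonincreasing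
sequence `p₁ ≥ ⋯ ≥ p_m ≥ 0` with `∑ pᵢ ≤ 1`, the tail beyond the `D` largest terms obeys
`∑_{i>D} pᵢ ≤ (∑ᵢ pᵢ^α)^{1/α} · D^{−(1−α)/α}` for every `1 ≤ D < m`. -/
theorem renyi_truncation_bound (α : ℝ) (hα0 : 0 < α) (hα1 : α < 1)
    (m : ℕ) (p : Fin m → ℝ)
    (hmono : ∀ i j : Fin m, i ≤ j → p j ≤ p i)
    (hnonneg : ∀ i, 0 ≤ p i)
    (hsum : ∑ i, p i ≤ 1)
    (D : ℕ) (hD1 : 1 ≤ D) (hDm : D < m) :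
    ∑ i ∈ Finset.univ.filter (fun i : Fin m => D ≤ (i : ℕ)), p i ≤
      (∑ i, p i ^ α) ^ (1 / α) * (D : ℝ) ^ (-(1 - α) / α) := by
  set A := ∑ i, p i ^ α with hA
  have hA0 : 0 ≤ A := Finset.sum_nonneg fun i _ => Real.rpow_nonneg (hnonneg i) α
  set d : Fin m := ⟨D, hDm⟩ with hd
  set q := p d with hq
  have hq0 : 0 ≤ q := hnonneg d
  have hDpos : (0:ℝ) < D := by exact_mod_cast hD1
  have hfilt_eq : Finset.univ.filter (fun i : Fin m => D ≤ (i : ℕ)) = Finset.Ici d := by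
    ext i; simp [Fin.le_def, hd]
  have hfilt_lt : Finset.univ.filter (fun i : Fin m => (i : ℕ) < D) = Finset.Iio d := by
    ext i; simp [Fin.lt_def, hd]
  -- Step 1 : D * q^α ≤ A
  have hstep1 : (D:ℝ) * q ^ α ≤ A := by
    have h1 : (D:ℝ) * q ^ α = ∑ _i ∈ Finset.Iio d, q ^ α := by
      rw [Finset.sum_const, Fin.card_Iio, nsmul_eq_mul]
    rw [h1]
    calc ∑ _i ∈ Finset.Iio d, q ^ α
        ≤ ∑ i ∈ Finset.Iio d, p i ^ α := by
          refine Finset.sum_le_sum fun i hi => ?_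
          exact Real.rpow_le_rpow hq0 (hmono i d (le_of_lt (Finset.mem_Iio.mp hi))) hα0.le
      _ ≤ A := Finset.sum_le_sum_of_subset_of_nonneg (Finset.subset_univ _)
          (fun i _ _ => Real.rpow_nonneg (hnonneg i) α)
  -- Step 2 : tail ≤ q^(1-α) * A
  have htailA : ∑ i ∈ Finset.Ici d, p i ^ α ≤ A :=
    Finset.sum_le_sum_of_subset_of_nonneg (Finset.subset_univ _)
      (fun i _ _ => Real.rpow_nonneg (hnonneg i) α)
  have hstep2 : ∑ i ∈ Finset.Ici d, p i ≤ q ^ (1 - α) * A := by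
    calc ∑ i ∈ Finset.Ici d, p i
        ≤ ∑ i ∈ Finset.Ici d, q ^ (1 - α) * p i ^ α := by
          refine Finset.sum_le_sum fun i hi => ?_
          have hpi : p i ≤ q := hmono d i (Finset.mem_Ici.mp hi)
          have : p i = p i ^ (1 - α) * p i ^ α := by
            rw [← Real.rpow_add' (hnonneg i) (by norm_num)]
            simp
          calc p i = p i ^ (1 - α) * p i ^ α := this
            _ ≤ q ^ (1 - α) * p i ^ α := mul_le_mul_of_nonneg_right
                (Real.rpow_le_rpow (hnonneg i) hpi (by linarith : (0:ℝ) ≤ 1 - α))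
                (Real.rpow_nonneg (hnonneg i) α)
      _ = q ^ (1 - α) * ∑ i ∈ Finset.Ici d, p i ^ α := by rw [Finset.mul_sum]
      _ ≤ q ^ (1 - α) * A :=
          mul_le_mul_of_nonneg_left htailA (Real.rpow_nonneg hq0 _)
  rw [hfilt_eq]
  rcases eq_or_lt_of_le hq0 with hq0' | hqpos
  · -- q = 0
    have : ∑ i ∈ Finset.Ici d, p i ≤ 0 := by
      refine le_trans hstep2 ?_
      rw [← hq0', Real.zero_rpow (by linarith)]
      simp
    refine le_trans this (mul_nonneg (Real.rpow_nonneg hA0 _) (Real.rpow_nonneg hDpos.le _))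
  · -- q > 0
    have hApos : 0 < A := lt_of_lt_of_le (by positivity) hstep1
    have hqle : q ≤ (A / D) ^ (1 / α) := by
      have h1 : q ^ α ≤ A / D := by
        rw [le_div_iff₀ hDpos]; linarith [hstep1]
      have := Real.rpow_le_rpow (Real.rpow_nonneg hq0 α) h1 (by positivity : (0:ℝ) ≤ 1/α)
      rwa [← Real.rpow_mul hq0, mul_one_div, div_self hα0.ne',
        Real.rpow_one] at this
    have hADnn : (0:ℝ) ≤ A / D := by positivity
    have hq1 : q ^ (1 - α) ≤ (A / D) ^ ((1 - α) / α) := by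
      have h2 := Real.rpow_le_rpow hq0 hqle (by linarith : (0:ℝ) ≤ 1 - α)
      rwa [← Real.rpow_mul hADnn, one_div, inv_mul_eq_div] at h2
    have hAx : A ^ ((1 - α) / α) * A = A ^ (1 / α) := by
      rw [← Real.rpow_add_one hApos.ne']
      congr 1
      field_simp
      ring
    calc ∑ i ∈ Finset.Ici d, p i
        ≤ q ^ (1 - α) * A := hstep2
      _ ≤ (A / D) ^ ((1 - α) / α) * A := mul_le_mul_of_nonneg_right hq1 hA0
      _ = A ^ (1 / α) * (D:ℝ) ^ (-(1 - α) / α) := by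
          rw [neg_div, Real.rpow_neg hDpos.le, Real.div_rpow hA0 hDpos.le,
            div_mul_eq_mul_div, hAx, div_eq_mul_inv]
end
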